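/- Binary interpolation: let D be a partial order that is a dcpo with a basis β : B → D, and let x, y, z : D. If x ≪ z and y ≪ z, then there exists b : B with x ≪ β b, y ≪ β b, and β b ≪ z. -/

import Mathlib

/-- A partial order is a dcpo if every nonempty directed subset has a least upper bound. -/
def IsDcpo (α : Type*) [Preorder α] : Prop :=
  ∀ d : Set α, d.Nonempty → DirectedOn (· ≤ ·) d → ∃ a, IsLUB d a

/-- `x` is way below `y`: for every nonempty directed subset `d` with least upper bound `a`
such that `y ≤ a`, some element of `d` is above `x`. -/
def WayBelow {α : Type*} [Preorder α] (x y : α) : Prop :=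
  ∀ d : Set α, d.Nonempty → DirectedOn (· ≤ ·) d → ∀ a : α, IsLUB d a → y ≤ a →
    ∃ z ∈ d, x ≤ z

/-- `β : B → D` is a basis for the dcpo `D`: every `x : D` is the least upper bound of some
nonempty directed subset of the range of `β` all of whose elements are way below `x`. -/
def IsBasis {B D : Type*} [Preorder D] (β : B → D) : Prop :=
  ∀ x : D, ∃ d : Set D, d.Nonempty ∧ DirectedOn (· ≤ ·) d ∧ d ⊆ Set.range β ∧
    (∀ y ∈ d, WayBelow y x) ∧ IsLUB d x


/-- Way below implies ≤. -/
lemma wayBelow_le {D : Type*} [Preorder D] {u v : D} (h : WayBelow u v) : u ≤ v := by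
  obtain ⟨w, hw, huw⟩ := h {v} ⟨v, rfl⟩ (directedOn_singleton v)
    v isLUB_singleton le_rfl
  exact huw.trans (le_of_eq hw)

lemma le_trans_wayBelow {D : Type*} [Preorder D] {a b c : D}
    (hab : a ≤ b) (hbc : WayBelow b c) : WayBelow a c := by
  intro d hne hdir s hlub hcs
  obtain ⟨w, hw, hbw⟩ := hbc d hne hdir s hlub hcs
  exact ⟨w, hw, hab.trans hbw⟩

lemma wayBelow_trans_le {D : Type*} [Preorder D] {a b c : D}
    (hab : WayBelow a b) (hbc : b ≤ c) : WayBelow a c := by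
  intro d hne hdir s hlub hcs
  exact hab d hne hdir s hlub (hbc.trans hcs)

/-- Binary interpolation: in a dcpo with basis `β`, if `x ≪ z` and `y ≪ z` then there is
a basis element `β b` with `x ≪ β b`, `y ≪ β b` and `β b ≪ z`. -/
theorem binary_interpolation {B D : Type*} [PartialOrder D]
    (hD : IsDcpo D) (β : B → D) (hβ : IsBasis β) (x y z : D)
    (hxz : WayBelow x z) (hyz : WayBelow y z) :
    ∃ b : B, WayBelow x (β b) ∧ WayBelow y (β b) ∧ WayBelow (β b) z := by
  -- The set of elements two steps below z via basis elements.
  set M : Set D := {u | ∃ v ∈ Set.range β, WayBelow u v ∧ WayBelow v z} with hM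
  obtain ⟨d, hdne, hddir, hdsub, hdwb, hdlub⟩ := hβ z
  -- M is nonempty
  have ⟨v0, hv0⟩ := hdne
  obtain ⟨dv0, hdv0ne, _, _, hdv0wb, _⟩ := hβ v0
  obtain ⟨u0, hu0⟩ := hdv0ne
  have hMne : M.Nonempty := ⟨u0, v0, hdsub hv0, hdv0wb u0 hu0, hdwb v0 hv0⟩
  -- M is directed
  have hMdir : DirectedOn (· ≤ ·) M := by
    rintro u1 ⟨v1, hv1r, hu1v1, hv1z⟩ u2 ⟨v2, hv2r, hu2v2, hv2z⟩
    obtain ⟨w1, hw1d, hv1w1⟩ := hv1z d hdne hddir z hdlub le_rfl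
    obtain ⟨w2, hw2d, hv2w2⟩ := hv2z d hdne hddir z hdlub le_rfl
    obtain ⟨w, hwd, hw1w, hw2w⟩ := hddir w1 hw1d w2 hw2d
    obtain ⟨dw, hdwne, hdwdir, hdwsub, hdwwb, hdwlub⟩ := hβ w
    have hu1w : WayBelow u1 w := wayBelow_trans_le hu1v1 (hv1w1.trans hw1w)
    have hu2w : WayBelow u2 w := wayBelow_trans_le hu2v2 (hv2w2.trans hw2w)
    obtain ⟨s1, hs1, hu1s1⟩ := hu1w dw hdwne hdwdir w hdwlub le_rfl
    obtain ⟨s2, hs2, hu2s2⟩ := hu2w dw hdwne hdwdir w hdwlub le_rfl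
    obtain ⟨s, hs, hs1s, hs2s⟩ := hdwdir s1 hs1 s2 hs2
    exact ⟨s, ⟨w, hdsub hwd, hdwwb s hs, hdwb w hwd⟩, hu1s1.trans hs1s, hu2s2.trans hs2s⟩
  -- z is the lub of M
  have hMlub : IsLUB M z := by
    constructor
    · rintro u ⟨v, _, huv, hvz⟩
      exact (wayBelow_le huv).trans (wayBelow_le hvz)
    · intro c hc
      refine hdlub.2 fun v hv => ?_
      obtain ⟨dv, _, _, _, hdvwb, hdvlub⟩ := hβ v
      refine hdvlub.2 fun u hu => hc ⟨v, hdsub hv, hdvwb u hu, hdwb v hv⟩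
  -- apply way-below of x and y to M
  obtain ⟨u1, hu1M, hxu1⟩ := hxz M hMne hMdir z hMlub le_rfl
  obtain ⟨u2, hu2M, hyu2⟩ := hyz M hMne hMdir z hMlub le_rfl
  obtain ⟨u, huM, hu1u, hu2u⟩ := hMdir u1 hu1M u2 hu2M
  obtain ⟨v, ⟨b, rfl⟩, huv, hvz⟩ := huM
  exact ⟨b, le_trans_wayBelow (hxu1.trans hu1u) huv,
    le_trans_wayBelow (hyu2.trans hu2u) huv, hvz⟩
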